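/- arXiv:1410.1665 — 5 statements merged into one kernel-verified Lean document; each statement's English description precedes it below -/
import Mathlib

section
/- Let A be a C*-algebra and let (e_α) be an approximate identity for A, i.e. a net of positive elements of A with ‖e_α‖ ≤ 1 for all α and ‖e_α a − a‖ → 0 and ‖a e_α − a‖ → 0 for every a ∈ A. Let (μ_β) be a net in the continuous dual A* and let μ ∈ A* be such that μ_β → μ in the weak-* topology and ‖μ_β‖ → ‖μ‖. Then for every ε > 0: there exist indices α₀ and β₀ such that ‖e_{α₀}·μ_β − μ_β‖ < ε for every β ≥ β₀ and ‖e_{α₀}·μ − μ‖ < ε; and likewise there exist indices α₁ and β₁ such that ‖μ_β·e_{α₁} − μ_β‖ < ε for every β ≥ β₁ and ‖μ·e_{α₁} − μ‖ < ε. -/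
open Filter

section aux

/-- Choose a phase `c` of modulus `t` aligning `c*y` with `x`. -/
lemma phase_exists (x y : ℂ) {t : ℝ} (ht : 0 ≤ t) :
    ∃ c : ℂ, ‖c‖ = t ∧ ‖x‖ + t * ‖y‖ ≤ ‖x + c * y‖ := by
  classical
  set u : ℂ := if x = 0 then 1 else x / ‖x‖ with hu
  set v : ℂ := if y = 0 then 1 else (starRingEnd ℂ) y / ‖y‖ with hv
  have hun : ‖u‖ = 1 := by
    rw [hu]; split_ifs with h
    · simp
    · rw [norm_div, Complex.norm_real, Real.norm_eq_abs, abs_of_nonneg (norm_nonneg x),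
        div_self (norm_ne_zero_iff.mpr h)]
  have hvn : ‖v‖ = 1 := by
    rw [hv]; split_ifs with h
    · simp
    · rw [norm_div, RingHomIsometric.norm_map, Complex.norm_real, Real.norm_eq_abs,
        abs_of_nonneg (norm_nonneg y), div_self (norm_ne_zero_iff.mpr h)]
  have hxu : x = (‖x‖ : ℂ) * u := by
    rw [hu]; split_ifs with h
    · simp [h]
    · rw [mul_div_cancel₀]
      exact_mod_cast norm_ne_zero_iff.mpr h
  have hvy : v * y = (‖y‖ : ℂ) := by
    rw [hv]; split_ifs with h
    · simp [h]
    · rw [div_mul_eq_mul_div, mul_comm ((starRingEnd ℂ) y) y, Complex.mul_conj']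
      rw [sq]
      field_simp
  refine ⟨(t : ℂ) * u * v, ?_, ?_⟩
  · simp [norm_mul, hun, hvn, abs_of_nonneg ht]
  · have key : x + (t : ℂ) * u * v * y = u * (((‖x‖ + t * ‖y‖ : ℝ)) : ℂ) := by
      rw [mul_assoc ((t:ℂ) * u) v y, hvy]
      nth_rewrite 1 [hxu]
      push_cast
      ring
    rw [key, norm_mul, hun, one_mul, Complex.norm_real, Real.norm_eq_abs,
      abs_of_nonneg (by positivity)]

lemma opnorm_le_of_unit {A : Type*} [NonUnitalNormedRing A]
    [NormedSpace ℂ A] (g : A →L[ℂ] ℂ) {B : ℝ} (hB : 0 ≤ B)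
    (h : ∀ z : A, ‖z‖ ≤ 1 → ‖g z‖ ≤ B) : ‖g‖ ≤ B := by
  refine g.opNorm_le_bound hB fun z => ?_
  rcases eq_or_ne z 0 with rfl | hz
  · simp
  · have hz' : 0 < ‖z‖ := norm_pos_iff.mpr hz
    have h1 := h (((‖z‖ : ℂ))⁻¹ • z) ?_
    · rw [map_smul, norm_smul, norm_inv, Complex.norm_real, Real.norm_eq_abs,
        abs_of_pos hz'] at h1
      calc ‖g z‖ = ‖z‖ * (‖z‖⁻¹ * ‖g z‖) := by field_simp
      _ ≤ ‖z‖ * B := by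
        refine mul_le_mul_of_nonneg_left ?_ hz'.le
        exact h1
      _ = B * ‖z‖ := mul_comm _ _
    · rw [norm_smul, norm_inv, Complex.norm_real, Real.norm_eq_abs, abs_of_pos hz']
      rw [inv_mul_cancel₀ hz'.ne']

end aux

section core

variable {A : Type*} [NonUnitalNormedRing A] [StarRing A] [CStarRing A]
    [NormedSpace ℂ A] [IsScalarTower ℂ A A] [SMulCommClass ℂ A A]

/-- Norm bound on perturbations `a + (v - v*e)` (left version). -/
lemma ball_left (e a v : A) {δ t : ℝ} (hestar : star e = e) (he1 : ‖e‖ ≤ 1)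
    (ha : ‖a‖ ≤ 1) (hv : ‖v‖ ≤ t) (hae : ‖a - a * e‖ ≤ δ) (hδ0 : 0 ≤ δ) (ht0 : 0 ≤ t) :
    ‖a + (v - v * e)‖ ≤ 1 + t * δ + 2 * t ^ 2 := by
  set w : A := v - v * e with hw
  have hw2 : ‖w‖ ≤ 2 * t := by
    calc ‖v - v * e‖ ≤ ‖v‖ + ‖v * e‖ := norm_sub_le _ _
    _ ≤ t + ‖v‖ * ‖e‖ := by gcongr; exact norm_mul_le _ _
    _ ≤ t + t * 1 := by
        refine add_le_add le_rfl (mul_le_mul hv he1 (norm_nonneg _) ht0)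
    _ = 2 * t := by ring
  have hcross : ‖a * star w‖ ≤ δ * t := by
    have hws : star w = star v - e * star v := by
      rw [hw, star_sub, star_mul, hestar]
    have heq : a * star w = (a - a * e) * star v := by
      rw [hws, mul_sub, sub_mul, mul_assoc]
    rw [heq]
    calc ‖(a - a * e) * star v‖ ≤ ‖a - a * e‖ * ‖star v‖ := norm_mul_le _ _
    _ ≤ δ * t := by
        refine mul_le_mul hae ?_ (norm_nonneg _) hδ0
        rw [norm_star]; exact hv
  have hcross' : ‖w * star a‖ ≤ δ * t := by
    have : ‖w * star a‖ = ‖a * star w‖ := by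
      rw [← norm_star (w * star a), star_mul, star_star]
    rw [this]; exact hcross
  have hsq : ‖a + w‖ * ‖a + w‖ ≤ 1 + 2 * (t * δ) + 4 * t ^ 2 := by
    rw [← CStarRing.norm_self_mul_star]
    have hexp : (a + w) * star (a + w) =
        a * star a + a * star w + w * star a + w * star w := by
      rw [star_add]; noncomm_ring
    rw [hexp]
    calc ‖a * star a + a * star w + w * star a + w * star w‖
        ≤ ‖a * star a + a * star w + w * star a‖ + ‖w * star w‖ := norm_add_le _ _
    _ ≤ (‖a * star a + a * star w‖ + ‖w * star a‖) + ‖w * star w‖ := by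
        gcongr; exact norm_add_le _ _
    _ ≤ ((‖a * star a‖ + ‖a * star w‖) + ‖w * star a‖) + ‖w * star w‖ := by
        gcongr; exact norm_add_le _ _
    _ ≤ ((1 + δ * t) + δ * t) + (2*t) * (2*t) := by
        gcongr
        · rw [CStarRing.norm_self_mul_star]
          exact mul_le_one₀ ha (norm_nonneg a) ha
        · calc ‖w * star w‖ ≤ ‖w‖ * ‖star w‖ := norm_mul_le _ _
          _ ≤ (2*t) * (2*t) := by
              rw [norm_star]
              exact mul_le_mul hw2 hw2 (norm_nonneg _) (by positivity)
    _ = 1 + 2 * (t * δ) + 4 * t ^ 2 := by ring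
  nlinarith [norm_nonneg (a + w), sq_nonneg (t * δ), sq_nonneg t, mul_nonneg ht0 hδ0,
    mul_nonneg (mul_nonneg ht0 ht0) (mul_nonneg ht0 hδ0),
    sq_nonneg (t*δ + 2*t^2), mul_nonneg (mul_nonneg ht0 ht0) (mul_nonneg ht0 ht0)]

/-- Norm bound on perturbations `a + (v - e*v)` (right version). -/
lemma ball_right (e a v : A) {δ t : ℝ} (hestar : star e = e) (he1 : ‖e‖ ≤ 1)
    (ha : ‖a‖ ≤ 1) (hv : ‖v‖ ≤ t) (hae : ‖a - e * a‖ ≤ δ) (hδ0 : 0 ≤ δ) (ht0 : 0 ≤ t) :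
    ‖a + (v - e * v)‖ ≤ 1 + t * δ + 2 * t ^ 2 := by
  set w : A := v - e * v with hw
  have hw2 : ‖w‖ ≤ 2 * t := by
    calc ‖v - e * v‖ ≤ ‖v‖ + ‖e * v‖ := norm_sub_le _ _
    _ ≤ t + ‖e‖ * ‖v‖ := by gcongr; exact norm_mul_le _ _
    _ ≤ t + 1 * t := by
        refine add_le_add le_rfl (mul_le_mul he1 hv (norm_nonneg _) zero_le_one)
    _ = 2 * t := by ring
  have hcross : ‖star a * w‖ ≤ δ * t := by
    have heq : star a * w = star (a - e * a) * v := by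
      rw [hw, star_sub, star_mul, hestar, mul_sub, sub_mul, mul_assoc]
    rw [heq]
    calc ‖star (a - e * a) * v‖ ≤ ‖star (a - e * a)‖ * ‖v‖ := norm_mul_le _ _
    _ ≤ δ * t := by
        rw [norm_star]
        exact mul_le_mul hae hv (norm_nonneg _) hδ0
  have hcross' : ‖star w * a‖ ≤ δ * t := by
    have : ‖star w * a‖ = ‖star a * w‖ := by
      rw [← norm_star (star w * a), star_mul, star_star]
    rw [this]; exact hcross
  have hsq : ‖a + w‖ * ‖a + w‖ ≤ 1 + 2 * (t * δ) + 4 * t ^ 2 := by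
    rw [← CStarRing.norm_star_mul_self]
    have hexp : star (a + w) * (a + w) =
        star a * a + star a * w + star w * a + star w * w := by
      rw [star_add]; noncomm_ring
    rw [hexp]
    calc ‖star a * a + star a * w + star w * a + star w * w‖
        ≤ ‖star a * a + star a * w + star w * a‖ + ‖star w * w‖ := norm_add_le _ _
    _ ≤ (‖star a * a + star a * w‖ + ‖star w * a‖) + ‖star w * w‖ := by
        gcongr; exact norm_add_le _ _
    _ ≤ ((‖star a * a‖ + ‖star a * w‖) + ‖star w * a‖) + ‖star w * w‖ := by
        gcongr; exact norm_add_le _ _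
    _ ≤ ((1 + δ * t) + δ * t) + (2*t) * (2*t) := by
        gcongr
        · rw [CStarRing.norm_star_mul_self]
          exact mul_le_one₀ ha (norm_nonneg a) ha
        · calc ‖star w * w‖ ≤ ‖star w‖ * ‖w‖ := norm_mul_le _ _
          _ ≤ (2*t) * (2*t) := by
              rw [norm_star]
              exact mul_le_mul hw2 hw2 (norm_nonneg _) (by positivity)
    _ = 1 + 2 * (t * δ) + 4 * t ^ 2 := by ring
  nlinarith [norm_nonneg (a + w), sq_nonneg (t * δ), sq_nonneg t, mul_nonneg ht0 hδ0,
    mul_nonneg (mul_nonneg ht0 ht0) (mul_nonneg ht0 hδ0),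
    sq_nonneg (t*δ + 2*t^2), mul_nonneg (mul_nonneg ht0 ht0) (mul_nonneg ht0 ht0)]

end core

section key

variable {A : Type*} [NonUnitalNormedRing A] [StarRing A] [CStarRing A]
    [NormedSpace ℂ A] [IsScalarTower ℂ A A] [SMulCommClass ℂ A A]

/-- Key estimate, left version: `‖f - e·f‖ ≤ ‖f‖(δ + 2t) + η/t`. -/
lemma key_left (f : A →L[ℂ] ℂ) (e a : A) {δ t η : ℝ}
    (hestar : star e = e) (he1 : ‖e‖ ≤ 1) (ha : ‖a‖ ≤ 1)
    (ht : 0 < t) (hδ0 : 0 ≤ δ) (hη : 0 ≤ η)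
    (hae : ‖a - a * e‖ ≤ δ) (hfa : ‖f‖ ≤ ‖f a‖ + η) :
    ‖f.comp ((ContinuousLinearMap.mul ℂ A).flip e) - f‖ ≤ ‖f‖ * (δ + 2 * t) + η / t := by
  have hB : (0:ℝ) ≤ ‖f‖ * (δ + 2 * t) + η / t := by positivity
  refine opnorm_le_of_unit _ hB fun z hz => ?_
  have hval : (f.comp ((ContinuousLinearMap.mul ℂ A).flip e) - f) z = -(f (z - z * e)) := by
    simp only [ContinuousLinearMap.sub_apply, ContinuousLinearMap.comp_apply,
      ContinuousLinearMap.flip_apply, ContinuousLinearMap.mul_apply', map_sub]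
    ring
  rw [hval, norm_neg]
  -- main estimate for `‖f (z - z*e)‖`
  obtain ⟨c, hct, hphase⟩ := phase_exists (f a) (f (z - z * e)) ht.le
  have hsmul : c • (z - z * e) = c • z - (c • z) * e := by
    rw [smul_sub, smul_mul_assoc]
  have happ : f a + c * f (z - z * e) = f (a + (c • z - (c • z) * e)) := by
    rw [← hsmul, map_add, map_smul, smul_eq_mul]
  have hcz : ‖c • z‖ ≤ t := by
    rw [norm_smul, hct]
    calc t * ‖z‖ ≤ t * 1 := by gcongr
    _ = t := mul_one t
  have hball := ball_left e a (c • z) hestar he1 ha hcz hae hδ0 ht.le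
  have hchain : ‖f a‖ + t * ‖f (z - z * e)‖ ≤ ‖f‖ * (1 + t * δ + 2 * t ^ 2) := by
    calc ‖f a‖ + t * ‖f (z - z * e)‖ ≤ ‖f a + c * f (z - z * e)‖ := hphase
    _ = ‖f (a + (c • z - (c • z) * e))‖ := by rw [happ]
    _ ≤ ‖f‖ * ‖a + (c • z - (c • z) * e)‖ := f.le_opNorm _
    _ ≤ ‖f‖ * (1 + t * δ + 2 * t ^ 2) := by
        exact mul_le_mul_of_nonneg_left hball (norm_nonneg f)
  have hdiv : η / t * t = η := div_mul_cancel₀ η ht.ne'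
  nlinarith [norm_nonneg f, norm_nonneg (f (z - z * e))]

/-- Key estimate, right version: `‖f - f·e‖ ≤ ‖f‖(δ + 2t) + η/t`. -/
lemma key_right (f : A →L[ℂ] ℂ) (e a : A) {δ t η : ℝ}
    (hestar : star e = e) (he1 : ‖e‖ ≤ 1) (ha : ‖a‖ ≤ 1)
    (ht : 0 < t) (hδ0 : 0 ≤ δ) (hη : 0 ≤ η)
    (hae : ‖a - e * a‖ ≤ δ) (hfa : ‖f‖ ≤ ‖f a‖ + η) :
    ‖f.comp (ContinuousLinearMap.mul ℂ A e) - f‖ ≤ ‖f‖ * (δ + 2 * t) + η / t := by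
  have hB : (0:ℝ) ≤ ‖f‖ * (δ + 2 * t) + η / t := by positivity
  refine opnorm_le_of_unit _ hB fun z hz => ?_
  have hval : (f.comp (ContinuousLinearMap.mul ℂ A e) - f) z = -(f (z - e * z)) := by
    simp only [ContinuousLinearMap.sub_apply, ContinuousLinearMap.comp_apply,
      ContinuousLinearMap.mul_apply', map_sub]
    ring
  rw [hval, norm_neg]
  obtain ⟨c, hct, hphase⟩ := phase_exists (f a) (f (z - e * z)) ht.le
  have hsmul : c • (z - e * z) = c • z - e * (c • z) := by
    rw [smul_sub, mul_smul_comm]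
  have happ : f a + c * f (z - e * z) = f (a + (c • z - e * (c • z))) := by
    rw [← hsmul, map_add, map_smul, smul_eq_mul]
  have hcz : ‖c • z‖ ≤ t := by
    rw [norm_smul, hct]
    calc t * ‖z‖ ≤ t * 1 := by gcongr
    _ = t := mul_one t
  have hball := ball_right e a (c • z) hestar he1 ha hcz hae hδ0 ht.le
  have hchain : ‖f a‖ + t * ‖f (z - e * z)‖ ≤ ‖f‖ * (1 + t * δ + 2 * t ^ 2) := by
    calc ‖f a‖ + t * ‖f (z - e * z)‖ ≤ ‖f a + c * f (z - e * z)‖ := hphase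
    _ = ‖f (a + (c • z - e * (c • z)))‖ := by rw [happ]
    _ ≤ ‖f‖ * ‖a + (c • z - e * (c • z))‖ := f.le_opNorm _
    _ ≤ ‖f‖ * (1 + t * δ + 2 * t ^ 2) := by
        exact mul_le_mul_of_nonneg_left hball (norm_nonneg f)
  have hdiv : η / t * t = η := div_mul_cancel₀ η ht.ne'
  nlinarith [norm_nonneg f, norm_nonneg (f (z - e * z))]

end key

lemma exists_near_max {A : Type*} [NonUnitalNormedRing A] [NormedSpace ℂ A]
    (μ : A →L[ℂ] ℂ) {η : ℝ} (hη : 0 < η) : ∃ a : A, ‖a‖ ≤ 1 ∧ ‖μ‖ ≤ ‖μ a‖ + η := by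
  by_contra h
  push_neg at h
  have h0 : η < ‖μ‖ := by simpa using h 0 (by simp)
  have hle : ‖μ‖ ≤ ‖μ‖ - η :=
    opnorm_le_of_unit μ (by linarith) fun z hz => by linarith [h z hz]
  linarith


/-- **Lemma 4.2.** Let `A` be a C*-algebra and `(e α)` an approximate identity for `A`.
If `(μ β)` is a net in `A*` converging weak-* to `μ` with `‖μ β‖ → ‖μ‖`, then for every
`ε > 0` there are indices `α₀, β₀` with `‖e α₀ · μ β − μ β‖ < ε` for all `β ≥ β₀` and
`‖e α₀ · μ − μ‖ < ε`, and likewise on the other side.  Here `b·ν : a ↦ ν (a * b)` and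
`ν·b : a ↦ ν (b * a)`. -/
theorem approx_identity_dual_net
    {A : Type*} [NonUnitalNormedRing A] [StarRing A] [CStarRing A]
    [NormedSpace ℂ A] [IsScalarTower ℂ A A] [SMulCommClass ℂ A A]
    [CompleteSpace A] [PartialOrder A] [StarOrderedRing A]
    {κ : Type*} [Nonempty κ] [SemilatticeSup κ]
    {ι : Type*} [Nonempty ι] [SemilatticeSup ι]
    (e : κ → A)
    (he_pos : ∀ α, 0 ≤ e α) (he_norm : ∀ α, ‖e α‖ ≤ 1)
    (he_left : ∀ a : A, Tendsto (fun α => ‖e α * a - a‖) atTop (nhds 0))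
    (he_right : ∀ a : A, Tendsto (fun α => ‖a * e α - a‖) atTop (nhds 0))
    (μβ : ι → (A →L[ℂ] ℂ)) (μ : A →L[ℂ] ℂ)
    (hweakstar : ∀ a : A, Tendsto (fun β => μβ β a) atTop (nhds (μ a)))
    (hnorm : Tendsto (fun β => ‖μβ β‖) atTop (nhds ‖μ‖)) :
    ∀ ε > (0 : ℝ),
      (∃ α₀ β₀, (∀ β ≥ β₀,
          ‖(μβ β).comp ((ContinuousLinearMap.mul ℂ A).flip (e α₀)) - μβ β‖ < ε) ∧
          ‖μ.comp ((ContinuousLinearMap.mul ℂ A).flip (e α₀)) - μ‖ < ε) ∧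
      (∃ α₁ β₁, (∀ β ≥ β₁,
          ‖(μβ β).comp (ContinuousLinearMap.mul ℂ A (e α₁)) - μβ β‖ < ε) ∧
          ‖μ.comp (ContinuousLinearMap.mul ℂ A (e α₁)) - μ‖ < ε) := by
  intro ε hε
  set K : ℝ := ‖μ‖ + 1 with hK_def
  have hK : 0 < K := by positivity
  have hμK : ‖μ‖ < K := by rw [hK_def]; linarith
  set t : ℝ := ε / (6 * K) with ht_def
  have ht : 0 < t := by positivity
  set η : ℝ := ε * t / 6 with hη_def
  have hη : 0 < η := by positivity
  -- arithmetic facts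
  have h1 : K * (t + 2 * t) = ε / 2 := by
    rw [ht_def]; field_simp; ring
  have h2 : (2 * η) / t = ε / 3 := by
    rw [hη_def]; field_simp; ring
  have h3 : η / t = ε / 6 := by
    rw [hη_def]; field_simp
  -- near-maximizing element
  obtain ⟨a, ha1, ha2⟩ := exists_near_max μ hη
  -- eventual control of the net
  have hev : ∀ᶠ β in atTop, ‖μβ β‖ ≤ K ∧ ‖μβ β‖ ≤ ‖μβ β a‖ + 2 * η := by
    have E1 : ∀ᶠ β in atTop, ‖μβ β‖ < K := hnorm.eventually_lt_const hμK
    have E2 : ∀ᶠ β in atTop, ‖μβ β‖ < ‖μ‖ + η / 2 :=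
      hnorm.eventually_lt_const (by linarith)
    have E3 : ∀ᶠ β in atTop, ‖μ a‖ - η / 2 < ‖μβ β a‖ :=
      ((hweakstar a).norm).eventually_const_lt (by linarith)
    filter_upwards [E1, E2, E3] with β hb1 hb2 hb3
    exact ⟨hb1.le, by linarith⟩
  obtain ⟨β₀, hβ₀⟩ := eventually_atTop.mp hev
  -- generic bound for a functional satisfying the eventual controls (left side)
  constructor
  · -- left side
    obtain ⟨α₀, hα₀⟩ := eventually_atTop.mp ((he_right a).eventually_lt_const ht)
    have hestar : star (e α₀) = e α₀ := (IsSelfAdjoint.of_nonneg (he_pos α₀)).star_eq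
    have hae : ‖a - a * e α₀‖ ≤ t := by
      rw [norm_sub_rev]; exact (hα₀ α₀ le_rfl).le
    refine ⟨α₀, β₀, fun β hβ => ?_, ?_⟩
    · obtain ⟨hbK, hba⟩ := hβ₀ β hβ
      have hb := key_left (μβ β) (e α₀) a hestar (he_norm α₀) ha1 ht ht.le
        (by positivity) hae hba
      calc ‖(μβ β).comp ((ContinuousLinearMap.mul ℂ A).flip (e α₀)) - μβ β‖
          ≤ ‖μβ β‖ * (t + 2 * t) + (2 * η) / t := hb
      _ ≤ K * (t + 2 * t) + (2 * η) / t := by gcongr <;> linarith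
      _ = ε / 2 + ε / 3 := by rw [h1, h2]
      _ < ε := by linarith
    · have hb := key_left μ (e α₀) a hestar (he_norm α₀) ha1 ht ht.le hη.le hae ha2
      calc ‖μ.comp ((ContinuousLinearMap.mul ℂ A).flip (e α₀)) - μ‖
          ≤ ‖μ‖ * (t + 2 * t) + η / t := hb
      _ ≤ K * (t + 2 * t) + η / t := by gcongr <;> linarith
      _ = ε / 2 + ε / 6 := by rw [h1, h3]
      _ < ε := by linarith
  · -- right side
    obtain ⟨α₁, hα₁⟩ := eventually_atTop.mp ((he_left a).eventually_lt_const ht)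
    have hestar : star (e α₁) = e α₁ := (IsSelfAdjoint.of_nonneg (he_pos α₁)).star_eq
    have hae : ‖a - e α₁ * a‖ ≤ t := by
      rw [norm_sub_rev]; exact (hα₁ α₁ le_rfl).le
    refine ⟨α₁, β₀, fun β hβ => ?_, ?_⟩
    · obtain ⟨hbK, hba⟩ := hβ₀ β hβ
      have hb := key_right (μβ β) (e α₁) a hestar (he_norm α₁) ha1 ht ht.le
        (by positivity) hae hba
      calc ‖(μβ β).comp (ContinuousLinearMap.mul ℂ A (e α₁)) - μβ β‖
          ≤ ‖μβ β‖ * (t + 2 * t) + (2 * η) / t := hb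
      _ ≤ K * (t + 2 * t) + (2 * η) / t := by gcongr <;> linarith
      _ = ε / 2 + ε / 3 := by rw [h1, h2]
      _ < ε := by linarith
    · have hb := key_right μ (e α₁) a hestar (he_norm α₁) ha1 ht ht.le hη.le hae ha2
      calc ‖μ.comp (ContinuousLinearMap.mul ℂ A (e α₁)) - μ‖
          ≤ ‖μ‖ * (t + 2 * t) + η / t := hb
      _ ≤ K * (t + 2 * t) + η / t := by gcongr <;> linarith
      _ = ε / 2 + ε / 6 := by rw [h1, h3]
      _ < ε := by linarith
end

section
/- Let G be a second-countable locally compact Hausdorff topological group with left Haar measure λ. Let (μ_β) be a net of finite positive Borel measures on G and let μ be a finite positive Borel measure on G such that ∫_G g dμ_β → ∫_G g dμ for every g ∈ C₀(G) and μ_β(G) → μ(G). Then for every f ∈ L¹(G, λ), the convolutions μ_β ⋆ f converge to μ ⋆ f in the L¹-norm: ‖μ_β ⋆ f − μ ⋆ f‖_{L¹(G,λ)} → 0, where for a finite positive measure ν the convolution ν ⋆ f is the λ-a.e. defined function x ↦ ∫_G f(s⁻¹ x) dν(s), which belongs to L¹(G, λ) with ‖ν ⋆ f‖₁ ≤ ν(G)‖f‖₁.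 -/
set_option linter.unusedSectionVars false
open MeasureTheory Filter ZeroAtInfty Set
open scoped Pointwise

section Helpers
variable {G : Type*} [TopologicalSpace G] [Group G] [IsTopologicalGroup G]
    [LocallyCompactSpace G] [T2Space G] [SecondCountableTopology G]
    [MeasurableSpace G] [BorelSpace G]

theorem conv_package (lam : Measure G) [lam.IsHaarMeasure]
    (ν : Measure G) [IsFiniteMeasure ν] {f : G → ℂ} (hf : Integrable f lam) :
    (∀ᵐ x ∂lam, Integrable (fun s => f (s⁻¹ * x)) ν) ∧
    Integrable (fun x => ∫ s, f (s⁻¹ * x) ∂ν) lam ∧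
    ∫ x, ‖∫ s, f (s⁻¹ * x) ∂ν‖ ∂lam ≤ (ν Set.univ).toReal * ∫ x, ‖f x‖ ∂lam := by
  have hm : Measurable (fun z : G × G => z.1⁻¹ * z.2) :=
    measurable_fst.inv.mul measurable_snd
  have hmap : Measure.map (fun z : G × G => z.1⁻¹ * z.2) (ν.prod lam)
      = (ν Set.univ) • lam := by
    have h1 := measurePreserving_prod_inv_mul ν lam
    have : (fun z : G × G => z.1⁻¹ * z.2)
        = Prod.snd ∘ (fun z : G × G => (z.1, z.1⁻¹ * z.2)) := rfl
    rw [this, ← Measure.map_map measurable_snd (measurable_fst.prodMk hm), h1.map_eq,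
      Measure.map_snd_prod]
  have hqmp : Measure.QuasiMeasurePreserving (fun z : G × G => z.1⁻¹ * z.2)
      (ν.prod lam) lam := ⟨hm, hmap ▸ Measure.smul_absolutelyContinuous⟩
  have hprod : Integrable (fun z : G × G => f (z.1⁻¹ * z.2)) (ν.prod lam) := by
    refine ⟨hf.1.comp_quasiMeasurePreserving hqmp, ?_⟩
    have hlin : ∫⁻ z, ‖f (z.1⁻¹ * z.2)‖ₑ ∂(ν.prod lam)
        = ∫⁻ x, ‖f x‖ₑ ∂((ν Set.univ) • lam) := by
      rw [← hmap, lintegral_map' (hf.1.enorm.mono_ac (hmap ▸ Measure.smul_absolutelyContinuous)) hm.aemeasurable]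
    rw [HasFiniteIntegral, hlin, lintegral_smul_measure]
    exact ENNReal.mul_lt_top (measure_lt_top ν _) hf.2
  have hswap : Integrable (fun z : G × G => f (z.2⁻¹ * z.1)) (lam.prod ν) := hprod.swap
  refine ⟨hswap.prod_right_ae, hswap.integral_prod_left, ?_⟩
  calc ∫ x, ‖∫ s, f (s⁻¹ * x) ∂ν‖ ∂lam
      ≤ ∫ x, (∫ s, ‖f (s⁻¹ * x)‖ ∂ν) ∂lam := by
        refine integral_mono hswap.integral_prod_left.norm hswap.integral_norm_prod_left
          (fun x => norm_integral_le_integral_norm _)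
    _ = ∫ s, (∫ x, ‖f (s⁻¹ * x)‖ ∂lam) ∂ν := integral_integral_swap hswap.norm
    _ = ∫ s, (∫ x, ‖f x‖ ∂lam) ∂ν := by
        refine integral_congr_ae (Eventually.of_forall fun s => ?_)
        exact integral_mul_left_eq_self (fun x => ‖f x‖) s⁻¹
    _ = (ν Set.univ).toReal * ∫ x, ‖f x‖ ∂lam := by
        rw [integral_const, smul_eq_mul]; rfl

theorem uniform_right {g : G → ℂ} (hg : Continuous g) (hcs : HasCompactSupport g)
    {ε : ℝ} (hε : 0 < ε) :
    ∃ V ∈ nhds (1 : G), ∀ h ∈ V, ∀ u : G, ‖g (u * h) - g u‖ ≤ ε := by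
  obtain ⟨V₀, hV₀c, hV₀⟩ := exists_compact_mem_nhds (1 : G)
  have hS : IsCompact (tsupport g) := hcs
  have hT : IsCompact (tsupport g ∪ tsupport g * V₀⁻¹) := hS.union (hS.mul hV₀c.inv)
  have hopen : IsOpen {z : G × G | ‖g (z.1 * z.2) - g z.1‖ < ε} := by
    have hc : Continuous fun z : G × G => ‖g (z.1 * z.2) - g z.1‖ := by fun_prop
    exact isOpen_lt hc continuous_const
  have hsub : (tsupport g ∪ tsupport g * V₀⁻¹) ×ˢ ({1} : Set G)
      ⊆ {z : G × G | ‖g (z.1 * z.2) - g z.1‖ < ε} := by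
    rintro ⟨u, h⟩ ⟨-, hh⟩
    rcases hh with rfl
    simpa [mul_one] using hε
  obtain ⟨U, V₁, hU, hV₁, hTU, h1V₁, hUV₁⟩ :=
    generalized_tube_lemma hT isCompact_singleton hopen hsub
  refine ⟨V₀ ∩ V₁, inter_mem hV₀ (hV₁.mem_nhds (h1V₁ rfl)), ?_⟩
  intro h hh u
  by_cases hu : u ∈ tsupport g ∪ tsupport g * V₀⁻¹
  · have hmem : (u, h) ∈ U ×ˢ V₁ := ⟨hTU hu, hh.2⟩
    have := hUV₁ hmem
    exact le_of_lt this
  · have h1 : g u = 0 := image_eq_zero_of_notMem_tsupport fun h' => hu (Or.inl h')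
    have h2 : g (u * h) = 0 := by
      by_contra h2
      have hmem : u * h ∈ tsupport g := subset_tsupport g h2
      exact hu (Or.inr ⟨u * h, hmem, h⁻¹, Set.inv_mem_inv.2 hh.1, by group⟩)
    simp [h1, h2, hε.le]

theorem exists_c0 {g : G → ℂ} (hg : Continuous g) (hcs : HasCompactSupport g) (x : G) :
    ∃ Φ : C₀(G, ℂ), ∀ s, Φ s = g (s⁻¹ * x) := by
  have hcont : Continuous fun s : G => g (s⁻¹ * x) := by fun_prop
  have hc : HasCompactSupport fun s : G => g (s⁻¹ * x) :=
    hcs.comp_homeomorph ((Homeomorph.inv G).trans (Homeomorph.mulRight x))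
  exact ⟨⟨⟨_, hcont⟩, hc.is_zero_at_infty⟩, fun s => rfl⟩

theorem tail_bound (lam : Measure G) [lam.IsHaarMeasure]
    (ν : Measure G) [IsFiniteMeasure ν] {g : G → ℂ}
    (hg : Continuous g) (hcs : HasCompactSupport g) {K : Set G} (hK : IsCompact K) :
    ∫ x in (K * tsupport g)ᶜ, ‖∫ s, g (s⁻¹ * x) ∂ν‖ ∂lam
      ≤ (ν Kᶜ).toReal * ∫ x, ‖g x‖ ∂lam := by
  set ν' := ν.restrict Kᶜ with hν'
  have hgint : Integrable g lam := hg.integrable_of_hasCompactSupport hcs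
  have hpkg := conv_package lam ν' hgint
  have hCmeas : MeasurableSet ((K * tsupport g)ᶜ) :=
    ((hK.mul hcs).isClosed.measurableSet).compl
  calc ∫ x in (K * tsupport g)ᶜ, ‖∫ s, g (s⁻¹ * x) ∂ν‖ ∂lam
      = ∫ x in (K * tsupport g)ᶜ, ‖∫ s, g (s⁻¹ * x) ∂ν'‖ ∂lam := by
        refine setIntegral_congr_fun hCmeas fun x hx => ?_
        have hz : ∀ s ∉ Kᶜ, g (s⁻¹ * x) = 0 := by
          intro s hs
          by_contra hne
          have hmem : s⁻¹ * x ∈ tsupport g := subset_tsupport g hne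
          exact hx ⟨s, not_not.1 hs, s⁻¹ * x, hmem, by group⟩
        rw [show (∫ s, g (s⁻¹ * x) ∂ν) = ∫ s in Kᶜ, g (s⁻¹ * x) ∂ν from
          (setIntegral_eq_integral_of_forall_compl_eq_zero hz).symm]
    _ ≤ ∫ x, ‖∫ s, g (s⁻¹ * x) ∂ν'‖ ∂lam :=
        setIntegral_le_integral hpkg.2.1.norm (Eventually.of_forall fun x => norm_nonneg _)
    _ ≤ (ν' Set.univ).toReal * ∫ x, ‖g x‖ ∂lam := hpkg.2.2
    _ = (ν Kᶜ).toReal * ∫ x, ‖g x‖ ∂lam := by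
        rw [hν', Measure.restrict_apply_univ]

theorem exists_tight {ι : Type*} [Nonempty ι] [SemilatticeSup ι]
    (μβ : ι → Measure G) (hfin : ∀ i, IsFiniteMeasure (μβ i))
    (μ : Measure G) [IsFiniteMeasure μ]
    (hweakstar : ∀ g : C₀(G, ℂ),
      Tendsto (fun i => ∫ x, g x ∂(μβ i)) atTop (nhds (∫ x, g x ∂μ)))
    (hmass : Tendsto (fun i => ((μβ i) Set.univ).toReal) atTop
      (nhds ((μ Set.univ).toReal)))
    {ε : ℝ} (hε : 0 < ε) :
    ∃ K : Set G, IsCompact K ∧ ((μ Kᶜ)).toReal < ε ∧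
      ∀ᶠ i in atTop, (((μβ i) Kᶜ)).toReal < ε := by
  haveI := hfin
  obtain ⟨K₀, -, hK₀c, hK₀⟩ := MeasurableSet.univ.exists_isCompact_lt_add (μ := μ)
    (measure_ne_top μ _) (ε := ENNReal.ofReal (ε/4)) (ENNReal.ofReal_pos.2 (by positivity)).ne'
  obtain ⟨u, hu1, -, hucs, hu01⟩ :=
    exists_continuous_one_zero_of_isCompact hK₀c isClosed_empty (disjoint_empty _)
  set r := (μ Set.univ).toReal with hr
  have hK₀r : r < (μ K₀).toReal + ε/4 := by
    have := ENNReal.toReal_strict_mono (by finiteness) hK₀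
    rwa [ENNReal.toReal_add (measure_ne_top _ _) ENNReal.ofReal_ne_top,
      ENNReal.toReal_ofReal (by positivity)] at this
  set K := tsupport (u : G → ℝ) with hK
  have hKc : IsCompact K := hucs
  have hK₀K : K₀ ⊆ K := fun x hx => subset_tsupport _ (by simp [hu1 hx])
  -- the complex bundling of u
  have hcsC : HasCompactSupport (fun s : G => ((u s : ℝ) : ℂ)) :=
    hucs.comp_left (g := fun t : ℝ => (t : ℂ)) (by simp)
  have hint : ∀ (ν : Measure G) [IsFiniteMeasure ν], Integrable (u : G → ℝ) ν :=
    fun ν _ => u.continuous.integrable_of_hasCompactSupport hucs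
  set uC : C₀(G, ℂ) := ⟨⟨fun s => ((u s : ℝ) : ℂ), by fun_prop⟩, hcsC.is_zero_at_infty⟩
  have hreal : Tendsto (fun i => ∫ x, u x ∂(μβ i)) atTop (nhds (∫ x, u x ∂μ)) := by
    have h2 := (Complex.continuous_re.tendsto _).comp (hweakstar uC)
    have he : ∀ (ν : Measure G), (∫ x, uC x ∂ν).re = ∫ x, u x ∂ν := by
      intro ν
      have : ∫ x, uC x ∂ν = ((∫ x, u x ∂ν : ℝ) : ℂ) := integral_ofReal
      rw [this, Complex.ofReal_re]
    simpa only [Function.comp_def, he] using h2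
  have hμK₀ : (μ K₀).toReal ≤ ∫ x, u x ∂μ := by
    have h1 : (μ K₀).toReal = ∫ x in K₀, u x ∂μ := by
      calc (μ K₀).toReal = ∫ _x in K₀, (1:ℝ) ∂μ := by simp; rfl
        _ = ∫ x in K₀, u x ∂μ :=
          setIntegral_congr_fun hK₀c.measurableSet (fun x hx => (hu1 hx).symm)
    rw [h1]
    exact setIntegral_le_integral (hint μ) (Eventually.of_forall fun x => (hu01 x).1)
  have husmall : ∀ (ν : Measure G) [IsFiniteMeasure ν], ∫ x, u x ∂ν ≤ (ν K).toReal := by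
    intro ν _
    have h0 : ENNReal.ofReal (∫ x, u x ∂ν) ≤ ν K :=
      integral_le_measure (fun x _ => (hu01 x).2)
        (fun x hx => le_of_eq (image_eq_zero_of_notMem_tsupport hx))
    have := ENNReal.toReal_mono (measure_ne_top ν K) h0
    rwa [ENNReal.toReal_ofReal (integral_nonneg fun x => (hu01 x).1)] at this
  refine ⟨K, hKc, ?_, ?_⟩
  · have h1 : (μ Kᶜ).toReal ≤ (μ K₀ᶜ).toReal :=
      ENNReal.toReal_mono (measure_ne_top _ _) (measure_mono (compl_subset_compl.2 hK₀K))
    have h2 : (μ K₀ᶜ).toReal = r - (μ K₀).toReal := by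
      rw [measure_compl hK₀c.measurableSet (measure_ne_top _ _),
        ENNReal.toReal_sub_of_le (measure_mono (subset_univ _)) (measure_ne_top _ _)]
    linarith
  · have hE1 : ∀ᶠ i in atTop, |((μβ i) Set.univ).toReal - r| < ε/4 := by
      have := Metric.tendsto_nhds.1 hmass (ε/4) (by positivity)
      simpa [Real.dist_eq] using this
    have hE2 : ∀ᶠ i in atTop, |(∫ x, u x ∂(μβ i)) - ∫ x, u x ∂μ| < ε/4 := by
      have := Metric.tendsto_nhds.1 hreal (ε/4) (by positivity)
      simpa [Real.dist_eq] using this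
    filter_upwards [hE1, hE2] with i h1 h2
    have hsplit : ((μβ i) K).toReal + ((μβ i) Kᶜ).toReal = ((μβ i) Set.univ).toReal := by
      rw [← ENNReal.toReal_add (measure_ne_top _ _) (measure_ne_top _ _),
        measure_add_measure_compl hKc.isClosed.measurableSet]
    have h3 := husmall (μβ i)
    have h4 : ∫ x, u x ∂(μβ i) > ∫ x, u x ∂μ - ε/4 := by
      cases abs_lt.1 h2; linarith
    have h5 : ((μβ i) Set.univ).toReal < r + ε/4 := by
      cases abs_lt.1 h1; linarith
    linarith [hμK₀]

end Helpers

set_option maxHeartbeats 4000000 in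
/-- Commutative case of Theorem 4.1, restricted to positive measures: if a net `(μ β)` of finite
positive Borel measures on a second-countable locally compact group `G` converges weak-* (against
`C₀(G)`) to a finite positive measure `μ` and the total masses converge, then `μ β ⋆ f → μ ⋆ f`
in `L¹(G, λ)` for every `f ∈ L¹(G, λ)`, where `λ` is a left Haar measure. -/
theorem weakstar_mass_implies_strict_convergence
    {G : Type*} [TopologicalSpace G] [Group G] [IsTopologicalGroup G]
    [LocallyCompactSpace G] [T2Space G] [SecondCountableTopology G]
    [MeasurableSpace G] [BorelSpace G]
    (lam : Measure G) [lam.IsHaarMeasure]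
    {ι : Type*} [Nonempty ι] [SemilatticeSup ι]
    (μβ : ι → Measure G) (hfin : ∀ i, IsFiniteMeasure (μβ i))
    (μ : Measure G) [IsFiniteMeasure μ]
    (hweakstar : ∀ g : C₀(G, ℂ),
      Tendsto (fun i => ∫ x, g x ∂(μβ i)) atTop (nhds (∫ x, g x ∂μ)))
    (hmass : Tendsto (fun i => ((μβ i) Set.univ).toReal) atTop
      (nhds ((μ Set.univ).toReal))) :
    ∀ f : G → ℂ, Integrable f lam →
      Tendsto (fun i =>
          ∫ x, ‖(∫ s, f (s⁻¹ * x) ∂(μβ i)) - ∫ s, f (s⁻¹ * x) ∂μ‖ ∂lam)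
        atTop (nhds 0) := by
  intro f hf
  haveI := hfin
  set M := (μ Set.univ).toReal with hM
  have hM0 : 0 ≤ M := ENNReal.toReal_nonneg
  rw [Metric.tendsto_nhds]
  intro ε hε
  set e := ε/2 with he
  have he0 : 0 < e := by positivity
  suffices hsuf : ∀ᶠ i in atTop,
      (∫ x, ‖(∫ s, f (s⁻¹ * x) ∂(μβ i)) - ∫ s, f (s⁻¹ * x) ∂μ‖ ∂lam) ≤ e by
    filter_upwards [hsuf] with i hi
    have h0 : 0 ≤ ∫ x, ‖(∫ s, f (s⁻¹ * x) ∂(μβ i)) - ∫ s, f (s⁻¹ * x) ∂μ‖ ∂lam :=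
      integral_nonneg fun x => norm_nonneg _
    rw [Real.dist_eq, sub_zero, abs_of_nonneg h0]
    calc _ ≤ e := hi
      _ < ε := by rw [he]; linarith
  -- the constant `c`
  set c := 2*M + 2 with hc
  have hc0 : 0 < c := by positivity
  -- choose the compactly supported approximation `g`
  set δ₁ := e/(4*c) with hδ₁
  have hδ₁0 : 0 < δ₁ := by positivity
  obtain ⟨g, hgcs, hgclose, hgcont, hgint⟩ := hf.exists_hasCompactSupport_integral_sub_le hδ₁0
  set Ig := ∫ x, ‖g x‖ ∂lam with hIg
  have hIg0 : 0 ≤ Ig := integral_nonneg fun x => norm_nonneg _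
  set ε₂ := e/(12*(Ig+1)) with hε₂
  have hε₂0 : 0 < ε₂ := by positivity
  -- tightness compact K
  obtain ⟨K, hKcomp, hKμ, hKev⟩ := exists_tight μβ hfin μ hweakstar hmass hε₂0
  -- the compact set C and its measure
  set C := K * tsupport g with hCdef
  have hCcomp : IsCompact C := hKcomp.mul hgcs
  have hCmeas : MeasurableSet C := hCcomp.isClosed.measurableSet
  set L := (lam C).toReal with hL
  have hL0 : 0 ≤ L := ENNReal.toReal_nonneg
  have hLfin : lam C ≠ ⊤ := hCcomp.measure_lt_top.ne
  set ε₃ := e/(4*c*(L+1)) with hε₃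
  have hε₃0 : 0 < ε₃ := by positivity
  set ε₄ := e/(4*(L+1)) with hε₄
  have hε₄0 : 0 < ε₄ := by positivity
  -- uniform continuity neighborhood V
  obtain ⟨V, hV1, hV⟩ := uniform_right hgcont hgcs hε₃0
  have h1V : (1:G) ∈ interior V := mem_interior_iff_mem_nhds.2 hV1
  -- finite subcover of C
  have hUnhds : ∀ x ∈ C, (fun y => x * y) '' interior V ∈ nhds x := fun x _ =>
    ((Homeomorph.mulLeft x).isOpenMap _ isOpen_interior).mem_nhds ⟨1, h1V, mul_one x⟩
  obtain ⟨t, htC, hcover⟩ := hCcomp.elim_nhds_subcover (fun x => (fun y => x * y) '' interior V) hUnhds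
  -- integrability of translates of g
  have hgν : ∀ (ν : Measure G) [IsFiniteMeasure ν] (x : G),
      Integrable (fun s : G => g (s⁻¹ * x)) ν := by
    intro ν _ x
    exact (hgcont.comp (by fun_prop)).integrable_of_hasCompactSupport
      (hgcs.comp_homeomorph ((Homeomorph.inv G).trans (Homeomorph.mulRight x)))
  -- eventual events
  have hEmass : ∀ᶠ i in atTop, ((μβ i) Set.univ).toReal < M + 1 := by
    have := Metric.tendsto_nhds.1 hmass 1 one_pos
    filter_upwards [this] with i hi
    rw [Real.dist_eq] at hi
    cases abs_lt.1 hi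
    linarith
  have hEws : ∀ᶠ i in atTop, ∀ j ∈ t,
      ‖(∫ s, g (s⁻¹ * j) ∂(μβ i)) - ∫ s, g (s⁻¹ * j) ∂μ‖ < ε₄ := by
    rw [eventually_all_finset]
    intro j _
    obtain ⟨Φ, hΦ⟩ := exists_c0 hgcont hgcs j
    have h2 := Metric.tendsto_nhds.1 (hweakstar Φ) ε₄ hε₄0
    simpa only [dist_eq_norm, hΦ] using h2
  filter_upwards [hEmass, hKev, hEws] with i hMi hKi hwi
  -- notation for the current measure
  set ν := μβ i with hν
  -- packages
  have pack_i := conv_package lam ν hf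
  have pack_μ := conv_package lam μ hf
  have fg_i := conv_package lam ν (hf.sub hgint)
  have fg_μ := conv_package lam μ (hf.sub hgint)
  have g_i := conv_package lam ν hgint
  have g_μ := conv_package lam μ hgint
  -- a.e. pointwise triangle inequality
  have hae : ∀ᵐ x ∂lam,
      ‖(∫ s, f (s⁻¹ * x) ∂ν) - ∫ s, f (s⁻¹ * x) ∂μ‖ ≤
        ‖∫ s, (f (s⁻¹ * x) - g (s⁻¹ * x)) ∂ν‖
        + ‖(∫ s, g (s⁻¹ * x) ∂ν) - ∫ s, g (s⁻¹ * x) ∂μ‖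
        + ‖∫ s, (f (s⁻¹ * x) - g (s⁻¹ * x)) ∂μ‖ := by
    filter_upwards [pack_i.1, pack_μ.1] with x h1 h2
    have e1 : ∫ s, (f (s⁻¹ * x) - g (s⁻¹ * x)) ∂ν
        = (∫ s, f (s⁻¹ * x) ∂ν) - ∫ s, g (s⁻¹ * x) ∂ν := integral_sub h1 (hgν ν x)
    have e2 : ∫ s, (f (s⁻¹ * x) - g (s⁻¹ * x)) ∂μ
        = (∫ s, f (s⁻¹ * x) ∂μ) - ∫ s, g (s⁻¹ * x) ∂μ := integral_sub h2 (hgν μ x)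
    rw [e1, e2]
    have : (∫ s, f (s⁻¹ * x) ∂ν) - ∫ s, f (s⁻¹ * x) ∂μ
        = ((∫ s, f (s⁻¹ * x) ∂ν) - ∫ s, g (s⁻¹ * x) ∂ν)
          + (((∫ s, g (s⁻¹ * x) ∂ν) - ∫ s, g (s⁻¹ * x) ∂μ)
            + -((∫ s, f (s⁻¹ * x) ∂μ) - ∫ s, g (s⁻¹ * x) ∂μ)) := by ring
    rw [this]
    refine (norm_add_le _ _).trans ?_
    rw [add_assoc]
    gcongr
    refine (norm_add_le _ _).trans ?_
    rw [norm_neg]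
  -- integrable pieces
  have int_t1 : Integrable (fun x => ‖∫ s, (f (s⁻¹ * x) - g (s⁻¹ * x)) ∂ν‖) lam :=
    fg_i.2.1.norm
  have int_t2 : Integrable
      (fun x => ‖(∫ s, g (s⁻¹ * x) ∂ν) - ∫ s, g (s⁻¹ * x) ∂μ‖) lam :=
    (g_i.2.1.sub g_μ.2.1).norm
  have int_t3 : Integrable (fun x => ‖∫ s, (f (s⁻¹ * x) - g (s⁻¹ * x)) ∂μ‖) lam :=
    fg_μ.2.1.norm
  -- main splitting
  have hsplit : (∫ x, ‖(∫ s, f (s⁻¹ * x) ∂ν) - ∫ s, f (s⁻¹ * x) ∂μ‖ ∂lam)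
      ≤ (∫ x, ‖∫ s, (f (s⁻¹ * x) - g (s⁻¹ * x)) ∂ν‖ ∂lam)
        + (∫ x, ‖(∫ s, g (s⁻¹ * x) ∂ν) - ∫ s, g (s⁻¹ * x) ∂μ‖ ∂lam)
        + (∫ x, ‖∫ s, (f (s⁻¹ * x) - g (s⁻¹ * x)) ∂μ‖ ∂lam) := by
    have int12 : Integrable (fun x =>
        ‖∫ s, (f (s⁻¹ * x) - g (s⁻¹ * x)) ∂ν‖
        + ‖(∫ s, g (s⁻¹ * x) ∂ν) - ∫ s, g (s⁻¹ * x) ∂μ‖) lam := int_t1.add int_t2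
    have int123 : Integrable (fun x =>
        (‖∫ s, (f (s⁻¹ * x) - g (s⁻¹ * x)) ∂ν‖
        + ‖(∫ s, g (s⁻¹ * x) ∂ν) - ∫ s, g (s⁻¹ * x) ∂μ‖)
        + ‖∫ s, (f (s⁻¹ * x) - g (s⁻¹ * x)) ∂μ‖) lam := int12.add int_t3
    have h1 := integral_mono_ae (pack_i.2.1.sub pack_μ.2.1).norm int123 ?_
    · rw [integral_add int12 int_t3, integral_add int_t1 int_t2] at h1
      exact h1
    · filter_upwards [hae] with x hx
      simpa only [Pi.sub_apply] using hx
  -- first and third terms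
  have hA1 : (∫ x, ‖∫ s, (f (s⁻¹ * x) - g (s⁻¹ * x)) ∂ν‖ ∂lam) ≤ (M+1) * δ₁ := by
    refine fg_i.2.2.trans ?_
    have h2 : (∫ x, ‖f x - g x‖ ∂lam) ≤ δ₁ := hgclose
    have h3 : (ν Set.univ).toReal ≤ M + 1 := hMi.le
    exact mul_le_mul h3 h2 (integral_nonneg fun x => norm_nonneg _) (by linarith)
  have hA3 : (∫ x, ‖∫ s, (f (s⁻¹ * x) - g (s⁻¹ * x)) ∂μ‖ ∂lam) ≤ M * δ₁ := by
    refine fg_μ.2.2.trans ?_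
    exact mul_le_mul le_rfl hgclose (integral_nonneg fun x => norm_nonneg _) hM0
  -- second term : split over C and Cᶜ
  have hsplit2 : (∫ x, ‖(∫ s, g (s⁻¹ * x) ∂ν) - ∫ s, g (s⁻¹ * x) ∂μ‖ ∂lam)
      = (∫ x in C, ‖(∫ s, g (s⁻¹ * x) ∂ν) - ∫ s, g (s⁻¹ * x) ∂μ‖ ∂lam)
        + ∫ x in Cᶜ, ‖(∫ s, g (s⁻¹ * x) ∂ν) - ∫ s, g (s⁻¹ * x) ∂μ‖ ∂lam :=
    (integral_add_compl hCmeas int_t2).symm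
  -- tail estimate
  have htail : (∫ x in Cᶜ, ‖(∫ s, g (s⁻¹ * x) ∂ν) - ∫ s, g (s⁻¹ * x) ∂μ‖ ∂lam)
      ≤ ε₂ * Ig + ε₂ * Ig := by
    have hmono : (∫ x in Cᶜ, ‖(∫ s, g (s⁻¹ * x) ∂ν) - ∫ s, g (s⁻¹ * x) ∂μ‖ ∂lam)
        ≤ (∫ x in Cᶜ, ‖∫ s, g (s⁻¹ * x) ∂ν‖ ∂lam)
          + ∫ x in Cᶜ, ‖∫ s, g (s⁻¹ * x) ∂μ‖ ∂lam := by
      rw [← integral_add (g_i.2.1.norm.restrict) (g_μ.2.1.norm.restrict)]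
      refine integral_mono int_t2.restrict
        ((g_i.2.1.norm.restrict).add (g_μ.2.1.norm.restrict)) ?_
      intro x
      exact norm_sub_le _ _
    refine hmono.trans (add_le_add ?_ ?_)
    · refine (tail_bound lam ν hgcont hgcs hKcomp).trans ?_
      exact mul_le_mul hKi.le le_rfl hIg0 hε₂0.le
    · refine (tail_bound lam μ hgcont hgcs hKcomp).trans ?_
      exact mul_le_mul hKμ.le le_rfl hIg0 hε₂0.le
  -- estimate on C
  have hptC : ∀ x ∈ C, ‖(∫ s, g (s⁻¹ * x) ∂ν) - ∫ s, g (s⁻¹ * x) ∂μ‖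
      ≤ ((2*M+1) * ε₃ + ε₄) := by
    intro x hx
    obtain ⟨j, hjt, hxj⟩ := Set.mem_iUnion₂.1 (hcover hx)
    obtain ⟨v, hv, hvx⟩ := hxj
    have hjx : j⁻¹ * x ∈ V := by
      have : j⁻¹ * x = v := by rw [← hvx]; group
      rw [this]; exact interior_subset hv
    have hstep : ∀ s : G, ‖g (s⁻¹ * x) - g (s⁻¹ * j)‖ ≤ ε₃ := by
      intro s
      have h5 := hV (j⁻¹ * x) hjx (s⁻¹ * j)
      rw [show s⁻¹ * j * (j⁻¹ * x) = s⁻¹ * x by group] at h5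
      exact h5
    have hd1 : ‖(∫ s, g (s⁻¹ * x) ∂ν) - ∫ s, g (s⁻¹ * j) ∂ν‖ ≤ ε₃ * (M+1) := by
      rw [← integral_sub (hgν ν x) (hgν ν j)]
      refine (norm_integral_le_of_norm_le_const
        (Eventually.of_forall fun s => hstep s)).trans ?_
      exact mul_le_mul le_rfl hMi.le ENNReal.toReal_nonneg hε₃0.le
    have hd2 : ‖(∫ s, g (s⁻¹ * j) ∂μ) - ∫ s, g (s⁻¹ * x) ∂μ‖ ≤ ε₃ * M := by
      rw [← integral_sub (hgν μ j) (hgν μ x)]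
      refine (norm_integral_le_of_norm_le_const
        (Eventually.of_forall fun s => ?_)).trans le_rfl
      rw [norm_sub_rev]
      exact hstep s
    have hd3 : ‖(∫ s, g (s⁻¹ * j) ∂ν) - ∫ s, g (s⁻¹ * j) ∂μ‖ < ε₄ := hwi j hjt
    have hsum : (∫ s, g (s⁻¹ * x) ∂ν) - ∫ s, g (s⁻¹ * x) ∂μ
        = ((∫ s, g (s⁻¹ * x) ∂ν) - ∫ s, g (s⁻¹ * j) ∂ν)
          + (((∫ s, g (s⁻¹ * j) ∂ν) - ∫ s, g (s⁻¹ * j) ∂μ)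
            + ((∫ s, g (s⁻¹ * j) ∂μ) - ∫ s, g (s⁻¹ * x) ∂μ)) := by ring
    rw [hsum]
    refine (norm_add_le _ _).trans ?_
    have := (norm_add_le ((∫ s, g (s⁻¹ * j) ∂ν) - ∫ s, g (s⁻¹ * j) ∂μ)
      ((∫ s, g (s⁻¹ * j) ∂μ) - ∫ s, g (s⁻¹ * x) ∂μ))
    nlinarith [hd1, hd2, hd3.le, this]
  have hC : (∫ x in C, ‖(∫ s, g (s⁻¹ * x) ∂ν) - ∫ s, g (s⁻¹ * x) ∂μ‖ ∂lam)
      ≤ L * ((2*M+1) * ε₃ + ε₄) := by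
    have h6 : (∫ x in C, ‖(∫ s, g (s⁻¹ * x) ∂ν) - ∫ s, g (s⁻¹ * x) ∂μ‖ ∂lam)
        ≤ ∫ _x in C, ((2*M+1) * ε₃ + ε₄) ∂lam := by
      refine setIntegral_mono_on int_t2.restrict ?_ hCmeas hptC
      exact integrableOn_const hLfin
    refine h6.trans ?_
    rw [setIntegral_const, smul_eq_mul]; exact le_rfl
  -- final arithmetic
  have key1 : c * δ₁ = e/4 := by rw [hδ₁]; field_simp [hc0.ne'] <;> ring
  have key2 : (Ig+1) * ε₂ = e/12 := by rw [hε₂]; field_simp [show Ig + 1 ≠ 0 by positivity] <;> ring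
  have key3 : (c * (L+1)) * ε₃ = e/4 := by rw [hε₃]; field_simp [hc0.ne', show L + 1 ≠ 0 by positivity] <;> ring
  have key4 : (L+1) * ε₄ = e/4 := by rw [hε₄]; field_simp [show L + 1 ≠ 0 by positivity] <;> ring
  have b1 : (M+1) * δ₁ + M * δ₁ ≤ e/4 := by nlinarith [hδ₁0.le]
  have b2 : ε₂ * Ig + ε₂ * Ig ≤ e/4 := by nlinarith [hε₂0.le, he0.le]
  have b3 : L * ((2*M+1) * ε₃ + ε₄) ≤ e/2 := by nlinarith [hε₃0.le, hε₄0.le, hL0]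
  calc (∫ x, ‖(∫ s, f (s⁻¹ * x) ∂ν) - ∫ s, f (s⁻¹ * x) ∂μ‖ ∂lam)
      ≤ _ := hsplit
    _ ≤ (M+1) * δ₁ + ((L * ((2*M+1) * ε₃ + ε₄)) + (ε₂ * Ig + ε₂ * Ig)) + M * δ₁ := by
        rw [hsplit2]
        gcongr
    _ ≤ e/4 + (e/2 + e/4) + 0 := by nlinarith [b1, b2, b3, hM0, hδ₁0.le]
    _ = e := by ring
end

section
/- Assume: (B2) for every t ∈ ℤ there exists l ∈ ℤ with B(t,l) ≠ 0; (B3) there exists t ≠ 0 with B(t,0) ≠ 0; (B4) for every t ≠ 0, B(t,l) → 0 as |l| → ∞. Let k ∈ ℤ and let γ : ℤ×ℤ → ℂ be a bounded function, and suppose that the operator u^k D_γ commutes with x_{l,t} for every l,t ∈ ℤ. Then: (i) if k ≠ 0, then γ = 0 (equivalently, D_γ = 0); (ii) if k = 0, then γ(m,n) = γ(m',n') whenever 2n − m = 2n' − m', i.e. γ(m,n) depends only on 2n − m. -/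
open Filter

/-- The Hilbert space `ℓ²(ℤ × ℤ)`. -/
noncomputable abbrev QE2Hilbert : Type := lp (fun _ : ℤ × ℤ => ℂ) 2

/-- The standard basis vector `e_{m,n}` of `ℓ²(ℤ × ℤ)`. -/
noncomputable def QE2basis (m n : ℤ) : QE2Hilbert := lp.single 2 (m, n) 1

/-- **Lemma 5.10.** Under conditions (B2), (B3), (B4) on the scalar family `B`, if `γ` is a
bounded function and the bounded operator `u ^ k D_γ` (the operator `T` with
`T e_{m,n} = γ(m,n) e_{m,n+k}`) commutes with every `x_{l,t}`, then: if `k ≠ 0` then `γ = 0`;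
and if `k = 0` then `γ(m,n)` depends only on `2n − m`. -/
theorem qE2_summand_commuting_with_x
    (B : ℤ × ℤ → ℂ) (hB1 : ∀ t l : ℤ, ‖B (t, l)‖ ≤ 1)
    (hB2 : ∀ t : ℤ, ∃ l : ℤ, B (t, l) ≠ 0)
    (hB3 : ∃ t : ℤ, t ≠ 0 ∧ B (t, 0) ≠ 0)
    (hB4 : ∀ t : ℤ, t ≠ 0 → Tendsto (fun l : ℤ => B (t, l)) cofinite (nhds 0))
    (x : ℤ → ℤ → (QE2Hilbert →L[ℂ] QE2Hilbert))
    (hx : ∀ l t m n : ℤ,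
      x l t (QE2basis m n) = B (t, l - n + 1) • QE2basis (m + 2 * t) (n + t))
    (k : ℤ) (γ : ℤ × ℤ → ℂ) (hγ : ∃ C : ℝ, ∀ p, ‖γ p‖ ≤ C)
    (T : QE2Hilbert →L[ℂ] QE2Hilbert)
    (hT : ∀ m n : ℤ, T (QE2basis m n) = γ (m, n) • QE2basis m (n + k))
    (hcomm : ∀ l t : ℤ, Commute T (x l t)) :
    (k ≠ 0 → γ = 0) ∧
    (k = 0 → ∀ m n m' n' : ℤ, 2 * n - m = 2 * n' - m' → γ (m, n) = γ (m', n')) := by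
  -- The key scalar commutation relation
  have key : ∀ t j m n : ℤ,
      B (t, j) * γ (m + 2 * t, n + t) = γ (m, n) * B (t, j - k) := by
    intro t j m n
    have h2 : T (x (j + n - 1) t (QE2basis m n)) = x (j + n - 1) t (T (QE2basis m n)) := by
      have h := (hcomm (j + n - 1) t).eq
      calc T (x (j + n - 1) t (QE2basis m n))
          = (T * x (j + n - 1) t) (QE2basis m n) := rfl
        _ = (x (j + n - 1) t * T) (QE2basis m n) := by rw [h]
        _ = _ := rfl
    rw [hx, hT, map_smul, map_smul, hT, hx] at h2
    have e1 : j + n - 1 - n + 1 = j := by ring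
    have e2 : j + n - 1 - (n + k) + 1 = j - k := by ring
    have e3 : n + k + t = n + t + k := by ring
    rw [e1, e2, e3] at h2
    have h3 := congrArg (fun f : QE2Hilbert => (f : ∀ _ : ℤ × ℤ, ℂ) (m + 2 * t, n + t + k)) h2
    simpa [QE2basis, lp.coeFn_smul, Pi.smul_apply, lp.single_apply_self, smul_eq_mul] using h3
  constructor
  · -- k ≠ 0
    intro hk
    funext p
    by_contra hp
    obtain ⟨t₀, ht₀, hB30⟩ := hB3
    set m := p.1 - 2 * t₀ with hm
    set n := p.2 - t₀ with hn
    have hpa : (m + 2 * t₀, n + t₀) = p := by simp [hm, hn]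
    set a := γ p with ha
    set b := γ (m, n) with hb
    have hrec0 : ∀ j : ℤ, B (t₀, j) * a = b * B (t₀, j - k) := by
      intro j
      have := key t₀ j m n
      rwa [hpa] at this
    have hb0 : b ≠ 0 := by
      intro h0
      have := hrec0 0
      rw [h0, zero_mul] at this
      exact hB30 (by
        rcases mul_eq_zero.mp this with h | h
        · exact h
        · exact absurd h hp)
    have hε : 0 < ‖B (t₀, 0)‖ := by
      simpa [norm_pos_iff] using hB30
    set ε := ‖B (t₀, 0)‖ with hεdef
    set r := b / a with hr
    have hr0 : r ≠ 0 := div_ne_zero hb0 hp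
    have hrec : ∀ j : ℤ, B (t₀, j) = r * B (t₀, j - k) := by
      intro j
      have hp' : a ≠ 0 := hp
      have h := hrec0 j
      rw [hr, div_mul_eq_mul_div, eq_div_iff hp']
      exact h
    have hpow : ∀ s : ℤ, B (t₀, s * k) = r ^ s * B (t₀, 0) := by
      intro s
      induction s using Int.induction_on with
      | zero => simp
      | succ i ih =>
        have h := hrec (((i : ℤ) + 1) * k)
        rw [show ((i : ℤ) + 1) * k - k = (i : ℤ) * k by ring] at h
        rw [h, ih, zpow_add_one₀ hr0]
        ring
      | pred i ih =>
        have h := hrec ((-(i : ℤ)) * k)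
        rw [show (-(i : ℤ)) * k - k = (-(i : ℤ) - 1) * k by ring] at h
        rw [ih] at h
        have h2 : B ((t₀, (-(i : ℤ) - 1) * k)) = r⁻¹ * (r ^ (-(i : ℤ)) * B (t₀, 0)) := by
          rw [h, inv_mul_cancel_left₀ hr0]
        rw [h2, zpow_sub_one₀ hr0]
        ring
    set c := ‖r‖ with hc
    have hc0 : 0 < c := by simpa [hc, norm_pos_iff] using hr0
    have habs : ∀ s : ℤ, ‖B (t₀, s * k)‖ = c ^ s * ε := by
      intro s
      rw [hpow s, norm_mul, norm_zpow]
    have hle : ∀ s : ℤ, c ^ s * ε ≤ 1 := by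
      intro s
      rw [← habs s]
      exact hB1 t₀ (s * k)
    have hc1 : c = 1 := by
      by_contra hne
      rcases lt_or_gt_of_ne hne with h | h
      · obtain ⟨nn, hnn⟩ := pow_unbounded_of_one_lt (1 / ε) (one_lt_inv₀ hc0 |>.2 h)
        have h2 := hle (-(nn : ℤ))
        rw [zpow_neg, ← inv_zpow, zpow_natCast] at h2
        have h3 : c⁻¹ ^ nn ≤ 1 / ε := by
          rw [le_div_iff₀ hε]
          exact h2
        linarith
      · obtain ⟨nn, hnn⟩ := pow_unbounded_of_one_lt (1 / ε) h
        have h2 := hle (nn : ℤ)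
        rw [zpow_natCast] at h2
        have h3 : c ^ nn ≤ 1 / ε := by
          rw [le_div_iff₀ hε]
          exact h2
        linarith
    have habs' : ∀ s : ℤ, ‖B (t₀, s * k)‖ = ε := by
      intro s
      rw [habs s, hc1, one_zpow, one_mul]
    have hev : ∀ᶠ l in cofinite, ‖B (t₀, l)‖ < ε := by
      have := (hB4 t₀ ht₀) (Metric.ball_mem_nhds (0 : ℂ) hε)
      filter_upwards [this] with l hl
      simpa [Complex.dist_eq] using hl
    have hfin : {l : ℤ | ¬ ‖B (t₀, l)‖ < ε}.Finite :=
      eventually_cofinite.mp hev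
    have hinj : Function.Injective (fun s : ℤ => s * k) := by
      intro s₁ s₂ h
      exact mul_right_cancel₀ hk h
    have hsub : Set.range (fun s : ℤ => s * k) ⊆ {l : ℤ | ¬ ‖B (t₀, l)‖ < ε} := by
      rintro l ⟨s, rfl⟩
      simp [habs' s]
    exact Set.infinite_range_of_injective hinj (hfin.subset hsub)
  · -- k = 0
    intro hk m n m' n' hrel
    have step : ∀ t m n : ℤ, γ (m + 2 * t, n + t) = γ (m, n) := by
      intro t m n
      obtain ⟨j, hj⟩ := hB2 t
      have h := key t j m n
      rw [hk, sub_zero] at h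
      exact mul_left_cancel₀ hj (h.trans (mul_comm _ _))
    have h := step (n' - n) m n
    rw [show m + 2 * (n' - n) = m' by omega, show n + (n' - n) = n' by ring] at h
    exact h.symm
end

section
/- Let y be a bounded operator on H and let (γ_k)_{k∈ℤ} be a sequence of bounded functions ℤ×ℤ → ℂ such that Σ_{k=−N}^{N} (1 − |k|/(N+1)) u^k D_{γ_k} → y in the strong operator topology as N → ∞. If y commutes with x_{l,t} for every l,t ∈ ℤ, then for every k ∈ ℤ the operator u^k D_{γ_k} commutes with x_{l,t} for every l,t ∈ ℤ. -/
open Filter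

namespace QE2Aux

/-- Evaluation at a point as a continuous linear functional. -/
noncomputable def evalCLM (q : ℤ × ℤ) : QE2Hilbert →L[ℂ] ℂ :=
  LinearMap.mkContinuous
    { toFun := fun f => f q
      map_add' := fun f g => rfl
      map_smul' := fun c f => rfl } 1
    (fun f => by rw [one_mul]; exact lp.norm_apply_le_norm two_ne_zero f q)

@[simp] theorem evalCLM_apply (q : ℤ × ℤ) (f : QE2Hilbert) : evalCLM q f = f q := rfl

theorem hasSum_apply (A : QE2Hilbert →L[ℂ] QE2Hilbert) (ξ : QE2Hilbert) :
    HasSum (fun p : ℤ × ℤ => ξ p • A (lp.single 2 p 1)) (A ξ) := by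
  have h := (lp.hasSum_single ENNReal.ofNat_ne_top ξ).mapL A
  refine h.congr_fun fun p => ?_
  have h2 : lp.single 2 p (ξ p) = ξ p • (lp.single 2 p (1 : ℂ) : QE2Hilbert) := by
    have h3 := lp.single_smul (E := fun _ : ℤ × ℤ => ℂ) 2 p (ξ p) (1 : ℂ)
    rw [smul_eq_mul, mul_one] at h3
    exact h3
  rw [h2, map_smul]

theorem hasSum_eval (A : QE2Hilbert →L[ℂ] QE2Hilbert) (ξ : QE2Hilbert) (q : ℤ × ℤ) :
    HasSum (fun p : ℤ × ℤ => ξ p * (A (lp.single 2 p 1)) q) ((A ξ) q) := by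
  have := (hasSum_apply A ξ).mapL (evalCLM q)
  simpa [smul_eq_mul] using this

theorem clm_ext_single {A A' : QE2Hilbert →L[ℂ] QE2Hilbert}
    (h : ∀ p : ℤ × ℤ, A (lp.single 2 p 1) = A' (lp.single 2 p 1)) : A = A' := by
  refine ContinuousLinearMap.ext fun ξ => ?_
  exact (hasSum_apply A ξ).unique ((hasSum_apply A' ξ).congr_fun fun p => by rw [h])

end QE2Aux

open QE2Aux

/-- **Lemma 5.12.** Let `y` be a bounded operator on `ℓ²(ℤ × ℤ)` whose Cesàro sums
`Σ_{k=-N}^{N} (1 - |k|/(N+1)) u^k D_{γ_k}` (each summand `T k = u^k D_{γ_k}` acting by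
`e_{m,n} ↦ γ_k(m,n) e_{m,n+k}`) converge to `y` in the strong operator topology. If `y` commutes
with every `x_{l,t}`, then each `u^k D_{γ_k}` commutes with every `x_{l,t}`. -/
theorem qE2_cesaro_summands_commute
    (B : ℤ × ℤ → ℂ) (hB1 : ∀ t l : ℤ, ‖B (t, l)‖ ≤ 1)
    (x : ℤ → ℤ → (QE2Hilbert →L[ℂ] QE2Hilbert))
    (hx : ∀ l t m n : ℤ,
      x l t (QE2basis m n) = B (t, l - n + 1) • QE2basis (m + 2 * t) (n + t))
    (γ : ℤ → ℤ × ℤ → ℂ) (hγ : ∀ k, ∃ C : ℝ, ∀ p, ‖γ k p‖ ≤ C)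
    (T : ℤ → (QE2Hilbert →L[ℂ] QE2Hilbert))
    (hT : ∀ k m n : ℤ, T k (QE2basis m n) = γ k (m, n) • QE2basis m (n + k))
    (y : QE2Hilbert →L[ℂ] QE2Hilbert)
    (hconv : ∀ ξ : QE2Hilbert, Tendsto (fun N : ℕ =>
        (∑ k ∈ Finset.Icc (-(N : ℤ)) (N : ℤ),
          (1 - |(k : ℝ)| / ((N : ℝ) + 1)) • T k) ξ)
      atTop (nhds (y ξ)))
    (hcomm : ∀ l t : ℤ, Commute y (x l t)) :
    ∀ k l t : ℤ, Commute (T k) (x l t) := by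
  classical
  -- Step 1: matrix coefficients of y
  have hy : ∀ k m n : ℤ, (y (QE2basis m n)) (m, n + k) = γ k (m, n) := by
    intro k m n
    have h1 : Tendsto (fun N : ℕ =>
        ((∑ j ∈ Finset.Icc (-(N : ℤ)) (N : ℤ),
          (1 - |(j : ℝ)| / ((N : ℝ) + 1)) • T j) (QE2basis m n)) (m, n + k))
        atTop (nhds ((y (QE2basis m n)) (m, n + k))) :=
      ((evalCLM (m, n + k)).continuous.tendsto _).comp (hconv (QE2basis m n))
    have key : ∀ N : ℕ, k.natAbs ≤ N →
        ((∑ j ∈ Finset.Icc (-(N : ℤ)) (N : ℤ),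
          (1 - |(j : ℝ)| / ((N : ℝ) + 1)) • T j) (QE2basis m n)) (m, n + k)
        = (1 - |(k : ℝ)| / ((N : ℝ) + 1)) • γ k (m, n) := by
      intro N hN
      have hk : k ∈ Finset.Icc (-(N : ℤ)) (N : ℤ) := by
        simp [Finset.mem_Icc]; omega
      rw [ContinuousLinearMap.sum_apply]
      rw [show ((∑ j ∈ Finset.Icc (-(N : ℤ)) (N : ℤ),
          ((1 - |(j : ℝ)| / ((N : ℝ) + 1)) • T j) (QE2basis m n)) : QE2Hilbert) (m, n + k)
        = ∑ j ∈ Finset.Icc (-(N : ℤ)) (N : ℤ),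
          (((1 - |(j : ℝ)| / ((N : ℝ) + 1)) • T j) (QE2basis m n)) (m, n + k) by
        rw [lp.coeFn_sum]; simp]
      rw [Finset.sum_eq_single_of_mem k hk]
      · simp only [ContinuousLinearMap.smul_apply, hT, lp.coeFn_smul, Pi.smul_apply]
        rw [QE2basis, lp.single_apply_self]
        simp [smul_smul, mul_comm]
      · intro j hj hjk
        simp only [ContinuousLinearMap.smul_apply, hT, lp.coeFn_smul, Pi.smul_apply]
        rw [QE2basis, lp.single_apply_ne]
        · simp
        · simp [Prod.ext_iff]; omega
    have h2 : Tendsto (fun N : ℕ => (1 - |(k : ℝ)| / ((N : ℝ) + 1)) • γ k (m, n))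
        atTop (nhds (γ k (m, n))) := by
      have ht : Tendsto (fun N : ℕ => (1 - |(k : ℝ)| / ((N : ℝ) + 1))) atTop (nhds 1) := by
        have : Tendsto (fun N : ℕ => |(k : ℝ)| / ((N : ℝ) + 1)) atTop (nhds 0) := by
          apply Tendsto.div_atTop tendsto_const_nhds
          exact tendsto_atTop_add_const_right _ 1 tendsto_natCast_atTop_atTop
        simpa using (tendsto_const_nhds (x := (1:ℝ))).sub this
      simpa using ht.smul (tendsto_const_nhds (x := γ k (m, n)))
    have h1' : Tendsto (fun N : ℕ => (1 - |(k : ℝ)| / ((N : ℝ) + 1)) • γ k (m, n))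
        atTop (nhds ((y (QE2basis m n)) (m, n + k))) := by
      refine h1.congr' ?_
      filter_upwards [eventually_ge_atTop k.natAbs] with N hN
      exact key N hN
    exact tendsto_nhds_unique h1' h2
  -- pointwise formula for x l t
  have hxeval : ∀ l t : ℤ, ∀ ξ : QE2Hilbert, ∀ a b : ℤ,
      (x l t ξ) (a, b) = B (t, l - (b - t) + 1) * ξ (a - 2 * t, b - t) := by
    intro l t ξ a b
    have h1 := hasSum_eval (x l t) ξ (a, b)
    have h2 : HasSum (fun p : ℤ × ℤ => ξ p * ((x l t) (lp.single 2 p 1)) (a, b))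
        (ξ (a - 2 * t, b - t) * ((x l t) (lp.single 2 (a - 2 * t, b - t) 1)) (a, b)) := by
      apply hasSum_single
      intro p hp
      have hxp : x l t (lp.single 2 p 1) = B (t, l - p.2 + 1) • QE2basis (p.1 + 2 * t) (p.2 + t) := by
        rw [show (lp.single 2 p (1:ℂ) : QE2Hilbert) = QE2basis p.1 p.2 by rw [QE2basis]]
        exact hx l t p.1 p.2
      rw [hxp]
      rw [show ((B (t, l - p.2 + 1) • QE2basis (p.1 + 2 * t) (p.2 + t) : QE2Hilbert)) (a, b)
        = B (t, l - p.2 + 1) • ((QE2basis (p.1 + 2 * t) (p.2 + t) : QE2Hilbert) (a, b)) by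
        rw [lp.coeFn_smul]; rfl]
      rw [QE2basis, lp.single_apply_ne]
      · simp
      · simp only [ne_eq, Prod.ext_iff, not_and]
        intro h1' h2'
        apply hp
        have : p.1 = a - 2 * t := by omega
        have : p.2 = b - t := by omega
        exact Prod.ext ‹p.1 = a - 2*t› ‹p.2 = b - t›
    have := h1.unique h2
    rw [this]
    rw [show x l t (lp.single 2 (a - 2*t, b - t) (1:ℂ)) = B (t, l - (b - t) + 1) •
      QE2basis (a - 2*t + 2*t) (b - t + t) from hx l t _ _]
    rw [show ((B (t, l - (b-t) + 1) • QE2basis (a - 2*t + 2*t) (b - t + t) : QE2Hilbert)) (a, b)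
      = B (t, l - (b-t) + 1) • ((QE2basis (a - 2*t + 2*t) (b - t + t) : QE2Hilbert) (a, b)) by
      rw [lp.coeFn_smul]; rfl]
    rw [show a - 2*t + 2*t = a by ring, show b - t + t = b by ring]
    rw [QE2basis, lp.single_apply_self]
    simp [smul_eq_mul, mul_comm]
  -- Step 2: scalar commutation identity
  have hscal : ∀ k l t m n : ℤ,
      B (t, l - n + 1) * γ k (m + 2 * t, n + t) = γ k (m, n) * B (t, l - (n + k) + 1) := by
    intro k l t m n
    have hc : y (x l t (QE2basis m n)) = x l t (y (QE2basis m n)) := by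
      have := (hcomm l t).eq
      calc y (x l t (QE2basis m n)) = (y * x l t) (QE2basis m n) := rfl
        _ = (x l t * y) (QE2basis m n) := by rw [this]
        _ = x l t (y (QE2basis m n)) := rfl
    have lhs : (y (x l t (QE2basis m n))) (m + 2 * t, n + t + k)
        = B (t, l - n + 1) * γ k (m + 2 * t, n + t) := by
      rw [hx, map_smul]
      rw [show ((B (t, l - n + 1) • y (QE2basis (m + 2*t) (n + t)) : QE2Hilbert)) (m + 2*t, n + t + k)
        = B (t, l - n + 1) • ((y (QE2basis (m + 2*t) (n + t)) : QE2Hilbert) (m + 2*t, n + t + k)) by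
        rw [lp.coeFn_smul]; rfl]
      rw [show (m + 2*t, n + t + k) = (m + 2*t, (n + t) + k) by ring_nf]
      rw [hy k (m + 2*t) (n + t)]
      rfl
    have rhs : (x l t (y (QE2basis m n))) (m + 2 * t, n + t + k)
        = B (t, l - (n + k) + 1) * γ k (m, n) := by
      rw [hxeval]
      rw [show n + t + k - t = n + k by ring, show m + 2*t - 2*t = m by ring]
      rw [hy k m n]
    rw [hc] at lhs
    rw [rhs] at lhs
    rw [← lhs]; ring
  -- Step 3: conclude
  intro k l t
  apply clm_ext_single
  intro p
  have hsp : (lp.single 2 p (1:ℂ) : QE2Hilbert) = QE2basis p.1 p.2 := by rw [QE2basis]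
  show (T k) ((x l t) (lp.single 2 p 1)) = (x l t) ((T k) (lp.single 2 p 1))
  rw [hsp, hx, hT, map_smul, map_smul, hT, hx, smul_smul, smul_smul]
  rw [show p.2 + t + k = p.2 + k + t by ring]
  rw [hscal k l t p.1 p.2]
end

section
/- Assume: (B2) for every t ∈ ℤ there exists l ∈ ℤ with B(t,l) ≠ 0; (B3) there exists t ≠ 0 with B(t,0) ≠ 0; (B4) for every t ≠ 0, B(t,l) → 0 as |l| → ∞. Let y be a bounded operator on H which is the strong-operator limit of a net (y_i) with sup_i ‖y_i‖ < ∞, each y_i of the form y_i = Σ_{k∈F_i} u^k D_{γ_{k,i}} for a finite set F_i ⊂ ℤ and bounded functions γ_{k,i} : ℤ×ℤ → ℂ. If y commutes with x_{l,t} for every l,t ∈ ℤ, then there exists a bounded function γ : ℤ×ℤ → ℂ with y = D_γ and γ(m,n) = γ(m',n') whenever 2n − m = 2n' − m' (i.e. y is a diagonal operator whose entries depend only on 2n − m). -/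
open Filter
open scoped ENNReal

/-- Evaluation at a point, as a continuous linear functional on `ℓ²(ℤ × ℤ)`. -/
noncomputable def QE2eval (q : ℤ × ℤ) : QE2Hilbert →L[ℂ] ℂ :=
  LinearMap.mkContinuous
    { toFun := fun f => f q
      map_add' := fun f g => by simp [lp.coeFn_add]
      map_smul' := fun c f => by simp [lp.coeFn_smul] }
    1 (fun f => by
      rw [one_mul]
      exact lp.norm_apply_le_norm (by norm_num) f q)

lemma QE2eval_apply (q : ℤ × ℤ) (f : QE2Hilbert) : QE2eval q f = f q := rfl

lemma QE2basis_apply (m n : ℤ) (q : ℤ × ℤ) :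
    (QE2basis m n) q = if q = (m, n) then 1 else 0 := by
  by_cases h : q = (m, n)
  · subst h; simp [QE2basis, lp.single_apply_self]
  · simp [QE2basis, lp.single_apply_ne _ _ _ h, h]

lemma QE2basis_norm (m n : ℤ) : ‖QE2basis m n‖ = 1 := by
  have := lp.norm_single (E := fun _ : ℤ × ℤ => ℂ) (p := 2) (by norm_num)
    (m, n) (1 : ℂ)
  simpa [QE2basis] using this

/-- The main conclusion of Section 5.3, combining Lemmas 5.10–5.12: under the hypotheses (B2),
(B3), (B4) on `B`, if a bounded operator `y` on `ℓ²(ℤ × ℤ)` is the strong-operator limit of a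
uniformly bounded net of finite sums `Σ_k u^k D_{γ_{k,i}}` and commutes with every `x_{l,t}`,
then `y = D_γ` for a bounded function `γ(m,n)` depending only on `2n − m`. -/
theorem qE2_separation_condition
    (B : ℤ × ℤ → ℂ) (hB1 : ∀ t l : ℤ, ‖B (t, l)‖ ≤ 1)
    (hB2 : ∀ t : ℤ, ∃ l : ℤ, B (t, l) ≠ 0)
    (hB3 : ∃ t : ℤ, t ≠ 0 ∧ B (t, 0) ≠ 0)
    (hB4 : ∀ t : ℤ, t ≠ 0 → Tendsto (fun l : ℤ => B (t, l)) cofinite (nhds 0))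
    (x : ℤ → ℤ → (QE2Hilbert →L[ℂ] QE2Hilbert))
    (hx : ∀ l t m n : ℤ,
      x l t (QE2basis m n) = B (t, l - n + 1) • QE2basis (m + 2 * t) (n + t))
    (v : ℤ → (QE2Hilbert →L[ℂ] QE2Hilbert))
    (hv : ∀ k m n : ℤ, v k (QE2basis m n) = QE2basis m (n + k))
    (D : (ℤ × ℤ → ℂ) → (QE2Hilbert →L[ℂ] QE2Hilbert))
    (hD : ∀ γ : ℤ × ℤ → ℂ, (∃ C : ℝ, ∀ p, ‖γ p‖ ≤ C) →
      ∀ m n : ℤ, D γ (QE2basis m n) = γ (m, n) • QE2basis m n)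
    {ι : Type*} [Nonempty ι] [SemilatticeSup ι]
    (yi : ι → (QE2Hilbert →L[ℂ] QE2Hilbert)) (y : QE2Hilbert →L[ℂ] QE2Hilbert)
    (hbdd : ∃ C : ℝ, ∀ i, ‖yi i‖ ≤ C)
    (hform : ∀ i, ∃ (F : Finset ℤ) (γ : ℤ → ℤ × ℤ → ℂ),
      (∀ k, ∃ C : ℝ, ∀ p, ‖γ k p‖ ≤ C) ∧
      yi i = ∑ k ∈ F, (v k).comp (D (γ k)))
    (hconv : ∀ ξ : QE2Hilbert, Tendsto (fun i => yi i ξ) atTop (nhds (y ξ)))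
    (hcomm : ∀ l t : ℤ, Commute y (x l t)) :
    ∃ γ : ℤ × ℤ → ℂ, (∃ C : ℝ, ∀ p, ‖γ p‖ ≤ C) ∧
      (∀ m n : ℤ, y (QE2basis m n) = γ (m, n) • QE2basis m n) ∧
      (∀ m n m' n' : ℤ, 2 * n - m = 2 * n' - m' → γ (m, n) = γ (m', n')) := by
  classical
  haveI : Fact ((1 : ℝ≥0∞) ≤ 2) := ⟨by norm_num⟩
  haveI : (atTop : Filter ι).NeBot := atTop_neBot
  set c : ℤ → ℤ → ℤ × ℤ → ℂ := fun m n p => (y (QE2basis m n)) p with hcdef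
  -- pointwise formula for x l t on a general vector
  have hxapply : ∀ l t : ℤ, ∀ f : QE2Hilbert, ∀ p : ℤ × ℤ,
      (x l t f) p = B (t, l - (p.2 - t) + 1) * f (p.1 - 2 * t, p.2 - t) := by
    intro l t f p
    have hs : HasSum (fun q : ℤ × ℤ => lp.single 2 q (f q)) f :=
      lp.hasSum_single (by norm_num) f
    have hs2 := ((QE2eval p).comp (x l t)).hasSum hs
    simp only [ContinuousLinearMap.comp_apply, QE2eval_apply] at hs2
    have key : ∀ q : ℤ × ℤ, (x l t (lp.single 2 q (f q))) p
        = if q = (p.1 - 2 * t, p.2 - t)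
          then B (t, l - (p.2 - t) + 1) * f (p.1 - 2 * t, p.2 - t) else 0 := by
      intro q
      have h1 : lp.single 2 q (f q) = f q • QE2basis q.1 q.2 := by
        rw [QE2basis, ← lp.single_smul, smul_eq_mul, mul_one]
      rw [h1, map_smul, hx l t q.1 q.2, lp.coeFn_smul, Pi.smul_apply, lp.coeFn_smul,
        Pi.smul_apply, QE2basis_apply]
      by_cases hq : q = (p.1 - 2 * t, p.2 - t)
      · subst hq
        rw [if_pos rfl, if_pos (by simp)]
        simp [smul_eq_mul]
        ring
      · rw [if_neg hq, if_neg, smul_zero, smul_zero]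
        intro h
        apply hq
        rw [h]
        simp
    simp only [key] at hs2
    exact hs2.unique (hasSum_ite_eq _ _)
  -- column support of yi
  have hyi : ∀ (i : ι) (m n : ℤ) (p : ℤ × ℤ), p.1 ≠ m → (yi i (QE2basis m n)) p = 0 := by
    intro i m n p hp
    obtain ⟨F, γ, hγ, hyiF⟩ := hform i
    rw [hyiF, ContinuousLinearMap.sum_apply, lp.coeFn_sum, Finset.sum_apply]
    refine Finset.sum_eq_zero fun k _ => ?_
    rw [ContinuousLinearMap.comp_apply, hD (γ k) (hγ k) m n, map_smul, hv, lp.coeFn_smul,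
      Pi.smul_apply, QE2basis_apply, if_neg, smul_zero]
    intro h
    exact hp (congrArg Prod.fst h)
  -- pointwise convergence
  have hcpt : ∀ (m n : ℤ) (p : ℤ × ℤ),
      Tendsto (fun i => (yi i (QE2basis m n)) p) atTop (nhds (c m n p)) := by
    intro m n p
    exact ((QE2eval p).continuous.tendsto _).comp (hconv (QE2basis m n))
  -- column support of y
  have hA : ∀ (m n : ℤ) (p : ℤ × ℤ), p.1 ≠ m → c m n p = 0 := by
    intro m n p hp
    have h2 : (fun i => (yi i (QE2basis m n)) p) = fun _ => (0 : ℂ) :=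
      funext fun i => hyi i m n p hp
    have h3 := hcpt m n p
    rw [h2] at h3
    exact tendsto_nhds_unique h3 tendsto_const_nhds
  -- the commutation relation on coefficients
  have hR : ∀ l t m n n' : ℤ,
      B (t, l - n' + 1) * c m n (m, n')
        = B (t, l - n + 1) * c (m + 2 * t) (n + t) (m + 2 * t, n' + t) := by
    intro l t m n n'
    have h := congrArg (fun z : QE2Hilbert →L[ℂ] QE2Hilbert => z (QE2basis m n)) (hcomm l t).eq
    simp only [ContinuousLinearMap.mul_apply] at h
    -- h : y (x l t (QE2basis m n)) = x l t (y (QE2basis m n))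
    have h3 : (y (x l t (QE2basis m n))) (m + 2 * t, n' + t)
        = (x l t (y (QE2basis m n))) (m + 2 * t, n' + t) := by rw [h]
    have lhs : (y (x l t (QE2basis m n))) (m + 2 * t, n' + t)
        = B (t, l - n + 1) * c (m + 2 * t) (n + t) (m + 2 * t, n' + t) := by
      rw [hx, map_smul, lp.coeFn_smul, Pi.smul_apply, smul_eq_mul]
    have rhs : (x l t (y (QE2basis m n))) (m + 2 * t, n' + t)
        = B (t, l - n' + 1) * c m n (m, n') := by
      rw [hxapply]
      simp [add_sub_cancel_right]
      exact Or.inl rfl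
    rw [lhs, rhs] at h3
    exact h3.symm
  -- off-diagonal entries in the column vanish
  have hC : ∀ m n n' : ℤ, n' ≠ n → c m n (m, n') = 0 := by
    intro m n n' hne
    by_contra hg0
    set d : ℤ := n' - n with hd
    have hdne : d ≠ 0 := sub_ne_zero.mpr hne
    set g0 : ℂ := c m n (m, n') with hg0def
    set g1 : ℂ := c (m + 2) (n + 1) (m + 2, n' + 1) with hg1def
    have hrel0 : ∀ a : ℤ, B (1, a) * g0 = B (1, a + d) * g1 := by
      intro a
      have h := hR (a + n' - 1) 1 m n n'
      have e1 : a + n' - 1 - n' + 1 = a := by ring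
      have e2 : a + n' - 1 - n + 1 = a + d := by rw [hd]; ring
      have e3 : m + 2 * 1 = m + 2 := by ring
      rw [e1, e2, e3] at h
      exact h
    obtain ⟨l₁, hl₁⟩ := hB2 1
    have hε : 0 < ‖B (1, l₁)‖ := norm_pos_iff.mpr hl₁
    have hfin : {a : ℤ | ‖B (1, l₁)‖ ≤ ‖B (1, a)‖}.Finite := by
      have h2 := Metric.tendsto_nhds.mp (hB4 1 one_ne_zero) _ hε
      rw [eventually_cofinite] at h2
      refine h2.subset ?_
      intro a ha
      simp only [Set.mem_setOf_eq] at ha ⊢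
      rw [dist_zero_right]
      exact not_lt.mpr ha
    obtain ⟨a₀, ha₀S, ha₀max⟩ := Set.exists_max_image _ (fun a => ‖B (1, a)‖)
      hfin ⟨l₁, by simp⟩
    set M : ℝ := ‖B (1, a₀)‖ with hM
    have hMε : ‖B (1, l₁)‖ ≤ M := ha₀S
    have hMpos : 0 < M := lt_of_lt_of_le hε hMε
    have hMmax : ∀ a : ℤ, ‖B (1, a)‖ ≤ M := by
      intro a
      by_cases h : ‖B (1, l₁)‖ ≤ ‖B (1, a)‖
      · exact ha₀max a h
      · exact le_trans (le_of_not_ge h) hMε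
    -- |g0| ≤ |g1|
    have h01 : ‖g0‖ ≤ ‖g1‖ := by
      have h := congrArg (‖·‖) (hrel0 a₀)
      rw [norm_mul, norm_mul] at h
      have : M * ‖g0‖ ≤ M * ‖g1‖ := by
        rw [← hM] at h
        rw [h]
        exact mul_le_mul_of_nonneg_right (hMmax _) (norm_nonneg _)
      exact le_of_mul_le_mul_left this hMpos
    have h10 : ‖g1‖ ≤ ‖g0‖ := by
      have h := congrArg (‖·‖) (hrel0 (a₀ - d))
      rw [norm_mul, norm_mul, sub_add_cancel] at h
      rw [← hM] at h
      have : M * ‖g1‖ ≤ M * ‖g0‖ := by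
        rw [← h]
        exact mul_le_mul_of_nonneg_right (hMmax _) (norm_nonneg _)
      exact le_of_mul_le_mul_left this hMpos
    have heq01 : ‖g1‖ = ‖g0‖ := le_antisymm h10 h01
    have hg0ne : ‖g0‖ ≠ 0 := norm_ne_zero_iff.mpr hg0
    -- periodicity of |B(1,·)|
    have hper : ∀ a : ℤ, ‖B (1, a)‖ = ‖B (1, a + d)‖ := by
      intro a
      have h := congrArg (‖·‖) (hrel0 a)
      rw [norm_mul, norm_mul, heq01] at h
      exact mul_right_cancel₀ hg0ne h
    have hperk : ∀ k : ℕ, ‖B (1, a₀ + k * d)‖ = M := by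
      intro k
      induction k with
      | zero => simp [hM]
      | succ k ih =>
        have e : a₀ + (k + 1 : ℕ) * d = (a₀ + k * d) + d := by push_cast; ring
        rw [e, ← hper, ih]
    have hinf : {a : ℤ | ‖B (1, l₁)‖ ≤ ‖B (1, a)‖}.Infinite := by
      apply Set.infinite_of_injective_forall_mem
        (f := fun k : ℕ => a₀ + (k : ℤ) * d)
      · intro k₁ k₂ hk
        have hk2 : a₀ + (k₁ : ℤ) * d = a₀ + (k₂ : ℤ) * d := hk
        have : (k₁ : ℤ) * d = (k₂ : ℤ) * d := by linarith
        exact Int.natCast_inj.mp (mul_right_cancel₀ hdne this)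
      · intro k
        simp only [Set.mem_setOf_eq]
        rw [hperk k]
        exact hMε
    exact hinf hfin
  -- translation invariance of the diagonal
  have hE : ∀ m n t : ℤ, c m n (m, n) = c (m + 2 * t) (n + t) (m + 2 * t, n + t) := by
    intro m n t
    obtain ⟨l₀, hl₀⟩ := hB2 t
    have h := hR (l₀ + n - 1) t m n n
    have e : l₀ + n - 1 - n + 1 = l₀ := by ring
    rw [e] at h
    exact mul_left_cancel₀ hl₀ h
  -- boundedness
  have hbound : ∀ m n : ℤ, ∀ p : ℤ × ℤ, ‖c m n p‖ ≤ ‖y‖ := by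
    intro m n p
    have h1 : ‖(y (QE2basis m n)) p‖ ≤ ‖y (QE2basis m n)‖ :=
      lp.norm_apply_le_norm (by norm_num) _ p
    have h2 : ‖y (QE2basis m n)‖ ≤ ‖y‖ * ‖QE2basis m n‖ := y.le_opNorm _
    rw [QE2basis_norm, mul_one] at h2
    calc ‖c m n p‖ = ‖(y (QE2basis m n)) p‖ := rfl
      _ ≤ ‖y (QE2basis m n)‖ := h1
      _ ≤ ‖y‖ := h2
  -- diagonality
  have hdiag : ∀ m n : ℤ, y (QE2basis m n) = c m n (m, n) • QE2basis m n := by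
    intro m n
    apply lp.ext
    funext p
    have : (c m n (m, n) • QE2basis m n) p = c m n (m, n) * (QE2basis m n) p := by
      rw [lp.coeFn_smul, Pi.smul_apply, smul_eq_mul]
    rw [this, QE2basis_apply]
    by_cases h1 : p = (m, n)
    · subst h1
      rw [if_pos rfl, mul_one]
    · rw [if_neg h1, mul_zero]
      by_cases h2 : p.1 = m
      · have h3 : p.2 ≠ n := by
          intro h
          exact h1 (Prod.ext h2 h)
        have hp : p = (m, p.2) := by rw [← h2]
        show c m n p = 0
        rw [hp]
        exact hC m n p.2 h3
      · exact hA m n p h2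
  refine ⟨fun p => c p.1 p.2 p, ⟨‖y‖, fun p => hbound p.1 p.2 p⟩, fun m n => hdiag m n,
    fun m n m' n' h => ?_⟩
  have h1 : m' = m + 2 * (n' - n) := by omega
  have h2 : n' = n + (n' - n) := by omega
  calc c m n (m, n) = c (m + 2 * (n' - n)) (n + (n' - n)) (m + 2 * (n' - n), n + (n' - n)) :=
        hE m n (n' - n)
    _ = c m' n' (m', n') := by rw [← h1, ← h2]
end
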